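/- Let T be an invertible measure-preserving transformation of (E,ℰ,μ), let U = U_{T⁻¹} be the Koopman unitary (Uh = h∘T⁻¹), and let V be a unitary operator on L²(μ). Then V* M_f V = M_{f∘T} for all f ∈ L^∞(μ) if and only if there exists g ∈ L^∞(μ) with V = M_g U. Moreover, in that case |g| = 1 μ-almost everywhere. -/

import Mathlib

open MeasureTheory

open Filter
open scoped ENNReal NNReal

namespace Stmt2Aux

variable {E : Type*} [MeasurableSpace E] {μ : Measure E}

lemma memL2_mul {g : E → ℂ} (hg : Measurable g) {C : ℝ} (hb : ∀ x, ‖g x‖ ≤ C)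
    (h : Lp ℂ 2 μ) : MemLp (fun x => g x * h x) 2 μ :=
  MemLp.of_le_mul (Lp.memLp h)
    (hg.aestronglyMeasurable.mul (Lp.aestronglyMeasurable h))
    (Eventually.of_forall fun x => by
      rw [norm_mul]; exact mul_le_mul_of_nonneg_right (hb x) (norm_nonneg _))

noncomputable def mulCLM {g : E → ℂ} (hg : Measurable g) {C : ℝ} (hb : ∀ x, ‖g x‖ ≤ C) :
    Lp ℂ 2 μ →L[ℂ] Lp ℂ 2 μ :=
  LinearMap.mkContinuous
    { toFun := fun h => (memL2_mul hg hb h).toLp _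
      map_add' := fun h k => by
        apply Lp.ext
        filter_upwards [MemLp.coeFn_toLp (memL2_mul hg hb (h + k)),
          MemLp.coeFn_toLp (memL2_mul hg hb h), MemLp.coeFn_toLp (memL2_mul hg hb k),
          Lp.coeFn_add h k,
          Lp.coeFn_add ((memL2_mul hg hb h).toLp _) ((memL2_mul hg hb k).toLp _)]
          with x e1 e2 e3 e4 e5
        simp only [Pi.add_apply] at *
        rw [e1, e5, e2, e3, e4]; ring
      map_smul' := fun c h => by
        apply Lp.ext
        filter_upwards [MemLp.coeFn_toLp (memL2_mul hg hb (c • h)),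
          MemLp.coeFn_toLp (memL2_mul hg hb h), Lp.coeFn_smul c h,
          Lp.coeFn_smul c ((memL2_mul hg hb h).toLp _)] with x e1 e2 e3 e4
        simp only [RingHom.id_apply]
        simp only [Pi.smul_apply, smul_eq_mul] at e3 e4
        rw [e1, e4, e2, e3]; ring }
    (max C 0)
    (fun h => by
      have hb' : ∀ᵐ x ∂μ, ‖g x * h x‖ ≤ (max C 0) * ‖(h : E → ℂ) x‖ :=
        Eventually.of_forall fun x => by
          rw [norm_mul]
          exact mul_le_mul_of_nonneg_right ((hb x).trans (le_max_left _ _)) (norm_nonneg _)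
      have h1 := eLpNorm_le_mul_eLpNorm_of_ae_le_mul hb' 2
      show ‖(memL2_mul hg hb h).toLp _‖ ≤ _
      rw [Lp.norm_toLp]
      calc (eLpNorm (fun x => g x * h x) 2 μ).toReal
          ≤ (ENNReal.ofReal (max C 0) * eLpNorm (h : E → ℂ) 2 μ).toReal :=
            ENNReal.toReal_mono
              (ENNReal.mul_ne_top ENNReal.ofReal_ne_top (Lp.eLpNorm_ne_top h)) h1
        _ = max C 0 * ‖h‖ := by
            rw [ENNReal.toReal_mul, ENNReal.toReal_ofReal (le_max_right C 0), Lp.norm_def])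

lemma mulCLM_coeFn {g : E → ℂ} (hg : Measurable g) {C : ℝ} (hb : ∀ x, ‖g x‖ ≤ C)
    (h : Lp ℂ 2 μ) : (mulCLM hg hb h : E → ℂ) =ᵐ[μ] fun x => g x * h x :=
  MemLp.coeFn_toLp (memL2_mul hg hb h)


lemma koopman {T : E ≃ᵐ E} (hT : MeasurePreserving T μ μ)
    (U : Lp ℂ 2 μ ≃ₗᵢ[ℂ] Lp ℂ 2 μ)
    (hU : ∀ h : Lp ℂ 2 μ, (U h : E → ℂ) =ᵐ[μ] fun x => h (T.symm x))
    {f : E → ℂ} (hf : Measurable f) {C : ℝ} (hb : ∀ x, ‖f x‖ ≤ C) (h : Lp ℂ 2 μ) :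
    U (mulCLM (hf.comp T.measurable) (fun x => hb (T x)) h) = mulCLM hf hb (U h) := by
  apply Lp.ext
  set q := mulCLM (μ := μ) (hf.comp T.measurable) (fun x => hb (T x)) h with hq
  have h1 : (q : E → ℂ) =ᵐ[μ] fun x => f (T x) * h x := mulCLM_coeFn _ _ h
  have h3 : (fun x => (q : E → ℂ) (T.symm x)) =ᵐ[μ]
      fun x => f (T (T.symm x)) * (h : E → ℂ) (T.symm x) :=
    (hT.symm T).quasiMeasurePreserving.ae_eq_comp h1
  have h4 : (fun x => f x * (h : E → ℂ) (T.symm x)) =ᵐ[μ] fun x => f x * (U h) x :=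
    (hU h).mono fun x hx => by dsimp only at hx ⊢; rw [hx]
  calc (U q : E → ℂ) =ᵐ[μ] fun x => (q : E → ℂ) (T.symm x) := hU q
    _ =ᵐ[μ] fun x => f x * (h : E → ℂ) (T.symm x) := by
        refine h3.trans (Eventually.of_forall fun x => ?_)
        dsimp only; rw [T.apply_symm_apply]
    _ =ᵐ[μ] fun x => f x * (U h) x := h4
    _ =ᵐ[μ] (mulCLM hf hb (U h) : E → ℂ) := (mulCLM_coeFn _ _ _).symm


lemma lintegral_sq_eq {g : E → ℂ} {A : Set E} (hA : MeasurableSet A) (hμA : μ A ≠ ∞)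
    (q : Lp ℂ 2 μ)
    (hq : (q : E → ℂ) =ᵐ[μ] fun x => g x * A.indicator (fun _ => (1:ℂ)) x)
    (hnorm : ‖q‖ = ‖(indicatorConstLp 2 hA hμA (1:ℂ) : Lp ℂ 2 μ)‖) :
    ∫⁻ x in A, (‖g x‖₊ : ℝ≥0∞) ^ (2:ℝ) ∂μ = μ A := by
  have e0 : eLpNorm (q : E → ℂ) 2 μ
      = eLpNorm ((indicatorConstLp 2 hA hμA (1:ℂ) : Lp ℂ 2 μ) : E → ℂ) 2 μ := by
    rw [Lp.norm_def, Lp.norm_def] at hnorm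
    exact (ENNReal.toReal_eq_toReal_iff' (Lp.eLpNorm_ne_top _) (Lp.eLpNorm_ne_top _)).mp hnorm
  have e1 : eLpNorm (fun x => g x * A.indicator (fun _ => (1:ℂ)) x) 2 μ
      = eLpNorm (A.indicator (fun _ => (1:ℂ))) 2 μ := by
    rw [← eLpNorm_congr_ae hq, ← eLpNorm_congr_ae (indicatorConstLp_coeFn (p := 2))]
    exact e0
  rw [eLpNorm_eq_lintegral_rpow_enorm_toReal two_ne_zero ENNReal.ofNat_ne_top,
    eLpNorm_eq_lintegral_rpow_enorm_toReal two_ne_zero ENNReal.ofNat_ne_top] at e1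
  have e2 := ENNReal.rpow_left_injective
    (x := 1 / (2:ℝ≥0∞).toReal) (by norm_num) e1
  have LHS : ∫⁻ x, (‖g x * A.indicator (fun _ => (1:ℂ)) x‖₊ : ℝ≥0∞) ^ ((2:ℝ≥0∞).toReal) ∂μ
      = ∫⁻ x in A, (‖g x‖₊ : ℝ≥0∞) ^ (2:ℝ) ∂μ := by
    rw [← lintegral_indicator hA]
    refine lintegral_congr fun x => ?_
    by_cases hx : x ∈ A
    · simp [Set.indicator_of_mem hx]
    · simp [Set.indicator_of_notMem hx, ENNReal.zero_rpow_of_pos]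
  have RHS : ∫⁻ x, (‖A.indicator (fun _ => (1:ℂ)) x‖₊ : ℝ≥0∞) ^ ((2:ℝ≥0∞).toReal) ∂μ = μ A := by
    have : ∀ x, (‖A.indicator (fun _ => (1:ℂ)) x‖₊ : ℝ≥0∞) ^ ((2:ℝ≥0∞).toReal)
        = A.indicator (fun _ => (1:ℝ≥0∞)) x := fun x => by
      by_cases hx : x ∈ A
      · simp [Set.indicator_of_mem hx]
      · simp [Set.indicator_of_notMem hx, ENNReal.zero_rpow_of_pos]
    rw [lintegral_congr this, lintegral_indicator hA, setLIntegral_one]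
  exact LHS.symm.trans (e2.trans RHS)


lemma ae_norm_eq_one_of_lintegral {g : E → ℂ} (hg : Measurable g) [SigmaFinite μ]
    (key : ∀ A, MeasurableSet A → μ A < ∞ →
      ∫⁻ x in A, (‖g x‖₊ : ℝ≥0∞) ^ (2:ℝ) ∂μ = μ A) :
    ∀ᵐ x ∂μ, ‖g x‖ = 1 := by
  have hmeas : Measurable fun x => (‖g x‖₊ : ℝ≥0∞) ^ (2:ℝ) := by
    have : (fun x => (‖g x‖₊ : ℝ≥0∞) ^ (2:ℝ)) = fun x => (‖g x‖₊ : ℝ≥0∞) ^ (2:ℕ) :=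
      funext fun x => by rw [← ENNReal.rpow_natCast]; norm_num
    rw [this]
    exact (hg.nnnorm.coe_nnreal_ennreal).pow_const 2
  have hae : (fun x => (‖g x‖₊ : ℝ≥0∞) ^ (2:ℝ)) =ᵐ[μ] fun _ => 1 :=
    ae_eq_of_forall_setLIntegral_eq_of_sigmaFinite hmeas measurable_const
      (fun A hA hμA => by rw [key A hA hμA, setLIntegral_one])
  filter_upwards [hae] with x hx
  have h1 : (‖g x‖₊ : ℝ≥0∞) = 1 := by
    refine ENNReal.rpow_left_injective (x := (2:ℝ)) two_ne_zero ?_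
    dsimp only at hx ⊢
    rw [hx, ENNReal.one_rpow]
  have h2 : ‖g x‖₊ = 1 := by exact_mod_cast h1
  calc ‖g x‖ = ((‖g x‖₊ : ℝ≥0) : ℝ) := (coe_nnnorm _).symm
    _ = 1 := by rw [h2]; norm_num

end Stmt2Aux

open Stmt2Aux

/-- Let `T` be an invertible measure-preserving transformation, `U = U_{T⁻¹}`
the Koopman unitary (`U h = h ∘ T⁻¹`) and `V` a unitary on `L²(μ)`. Then
`V* M_f V = M_{f∘T}` for all `f ∈ L^∞(μ)` iff `V = M_g U` for some `g ∈ L^∞(μ)`;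
moreover any such `g` has `|g| = 1` μ-a.e. The relation `V* M_f V = M_{f∘T}` is encoded by:
whenever `k` represents `M_f (V h)`, then `V⁻¹ k = V* k` represents `M_{f∘T} h`. -/
theorem stmt_2 {E : Type*} [MeasurableSpace E] (μ : Measure E) [SigmaFinite μ]
    (T : E ≃ᵐ E) (hT : MeasurePreserving T μ μ)
    (U : Lp ℂ 2 μ ≃ₗᵢ[ℂ] Lp ℂ 2 μ)
    (hU : ∀ h : Lp ℂ 2 μ, (U h : E → ℂ) =ᵐ[μ] fun x => h (T.symm x))
    (V : Lp ℂ 2 μ ≃ₗᵢ[ℂ] Lp ℂ 2 μ) :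
    ((∀ f : E → ℂ, Measurable f → (∃ C, ∀ x, ‖f x‖ ≤ C) →
        ∀ h k : Lp ℂ 2 μ, ((k : E → ℂ) =ᵐ[μ] fun x => f x * (V h) x) →
          ((V.symm k : E → ℂ) =ᵐ[μ] fun x => f (T x) * h x))
      ↔ (∃ g : E → ℂ, Measurable g ∧ (∃ C, ∀ x, ‖g x‖ ≤ C) ∧
          ∀ h : Lp ℂ 2 μ, (V h : E → ℂ) =ᵐ[μ] fun x => g x * (U h) x))
    ∧ (∀ g : E → ℂ, Measurable g → (∃ C, ∀ x, ‖g x‖ ≤ C) →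
        (∀ h : Lp ℂ 2 μ, (V h : E → ℂ) =ᵐ[μ] fun x => g x * (U h) x) →
        ∀ᵐ x ∂μ, ‖g x‖ = 1) := by
  classical
  constructor
  · constructor
    · intro Hcomm
      have hWapp : ∀ k : Lp ℂ 2 μ, (U.symm.trans V) k = V (U.symm k) := fun k => rfl
      set W := U.symm.trans V with hWdef
      have keyV : ∀ (f : E → ℂ) (hf : Measurable f) (C : ℝ) (hb : ∀ x, ‖f x‖ ≤ C)
          (h : Lp ℂ 2 μ),
          mulCLM hf hb (V h) = V (mulCLM (hf.comp T.measurable) (fun x => hb (T x)) h) := by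
        intro f hf C hb h
        have h1 := Hcomm f hf ⟨C, hb⟩ h (mulCLM hf hb (V h)) (mulCLM_coeFn _ _ _)
        have h2 : V.symm (mulCLM hf hb (V h))
            = mulCLM (hf.comp T.measurable) (fun x => hb (T x)) h :=
          Lp.ext (h1.trans (mulCLM_coeFn _ _ _).symm)
        rw [← h2, V.apply_symm_apply]
      have commW : ∀ (f : E → ℂ) (hf : Measurable f) (C : ℝ) (hb : ∀ x, ‖f x‖ ≤ C)
          (k : Lp ℂ 2 μ), W (mulCLM hf hb k) = mulCLM hf hb (W k) := by
        intro f hf C hb k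
        have hk : mulCLM hf hb k
            = U (mulCLM (hf.comp T.measurable) (fun x => hb (T x)) (U.symm k)) := by
          rw [koopman hT U hU hf hb (U.symm k), U.apply_symm_apply]
        rw [hWapp, hk, U.symm_apply_apply, ← keyV f hf C hb (U.symm k), hWapp]
      -- spanning sets
      have hsmeas : ∀ n, MeasurableSet (spanningSets μ n) := measurableSet_spanningSets μ
      have hsfin : ∀ n, μ (spanningSets μ n) ≠ ∞ := fun n => (measure_spanningSets_lt_top μ n).ne
      have hsmono : Monotone (spanningSets μ) := monotone_spanningSets μ
      have hex : ∀ x : E, ∃ n, x ∈ spanningSets μ n := fun x =>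
        Set.iUnion_eq_univ_iff.mp (iUnion_spanningSets μ) x
      have indMeas : ∀ (A : Set E), MeasurableSet A → ∀ c : ℂ,
          Measurable (A.indicator (fun _ => c)) := fun A hA c => measurable_const.indicator hA
      have indBd : ∀ (A : Set E) (c : ℂ) (x : E), ‖A.indicator (fun _ => c) x‖ ≤ ‖c‖ := by
        intro A c x
        by_cases hx : x ∈ A
        · rw [Set.indicator_of_mem hx]
        · rw [Set.indicator_of_notMem hx]; simp [norm_nonneg]
      set χ : ℕ → Lp ℂ 2 μ := fun n => indicatorConstLp 2 (hsmeas n) (hsfin n) (1:ℂ) with hχ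
      set u : ℕ → E → ℂ := fun n => ((W (χ n) : Lp ℂ 2 μ) : E → ℂ) with hu
      have humeas : ∀ n, Measurable (u n) := fun n => (Lp.stronglyMeasurable (W (χ n))).measurable
      -- multiplying χ n by an indicator of a subset of s n
      have hmulχ : ∀ (A : Set E) (hA : MeasurableSet A) (hμA : μ A ≠ ∞) (c : ℂ) (n : ℕ),
          A ⊆ spanningSets μ n →
          mulCLM (indMeas A hA c) (indBd A c) (χ n) = indicatorConstLp 2 hA hμA c := by
        intro A hA hμA c n hsub
        apply Lp.ext
        filter_upwards [mulCLM_coeFn (indMeas A hA c) (indBd A c) (χ n),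
          indicatorConstLp_coeFn (p := 2) (hs := hsmeas n) (hμs := hsfin n) (c := (1:ℂ)),
          indicatorConstLp_coeFn (p := 2) (hs := hA) (hμs := hμA) (c := c)] with x e1 e2 e3
        rw [e1, e3, e2]
        by_cases hx : x ∈ A
        · rw [Set.indicator_of_mem hx, Set.indicator_of_mem (hsub hx), mul_one]
        · rw [Set.indicator_of_notMem hx, zero_mul]
      have hcons : ∀ m n : ℕ, m ≤ n → ∀ᵐ x ∂μ, x ∈ spanningSets μ m → u n x = u m x := by
        intro m n hmn
        have e1 : mulCLM (indMeas _ (hsmeas m) 1) (indBd _ 1) (χ n) = χ m :=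
          hmulχ _ (hsmeas m) (hsfin m) 1 n (hsmono hmn)
        have e2 : W (χ m) = mulCLM (indMeas _ (hsmeas m) 1) (indBd _ 1) (W (χ n)) := by
          rw [← e1, commW]
        filter_upwards [mulCLM_coeFn (indMeas _ (hsmeas m) 1) (indBd _ 1) (W (χ n))]
          with x e3 hxm
        have : u m x = (spanningSets μ m).indicator (fun _ => (1:ℂ)) x * u n x := by
          rw [hu]; simp only
          rw [e2, e3]
        rw [this, Set.indicator_of_mem hxm, one_mul]
      set g0 : E → ℂ := fun x => u (Nat.find (hex x)) x with hg0
      have hg0meas : Measurable g0 :=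
        Measurable.find (p := fun n x => x ∈ spanningSets μ n) humeas (fun n => hsmeas n) hex
      have hgu : ∀ n, ∀ᵐ x ∂μ, x ∈ spanningSets μ n → g0 x = u n x := by
        intro n
        have hae : ∀ᵐ x ∂μ, ∀ m, m ≤ n → (x ∈ spanningSets μ m → u n x = u m x) :=
          ae_all_iff.2 fun m => by
            by_cases hmn : m ≤ n
            · filter_upwards [hcons m n hmn] with x hx using fun _ => hx
            · filter_upwards with x using fun h' => absurd h' hmn
        filter_upwards [hae] with x hx hxn
        have h1 : Nat.find (hex x) ≤ n := Nat.find_min' (hex x) hxn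
        have h2 : x ∈ spanningSets μ (Nat.find (hex x)) := Nat.find_spec (hex x)
        exact (hx _ h1 h2).symm
      -- the key a.e. identity for W on indicators
      have hWind : ∀ (c : ℂ) (A : Set E) (hA : MeasurableSet A) (hμA : μ A ≠ ∞),
          ((W (indicatorConstLp 2 hA hμA c) : Lp ℂ 2 μ) : E → ℂ)
            =ᵐ[μ] fun x => g0 x * A.indicator (fun _ => c) x := by
        intro c A hA hμA
        have step : ∀ n : ℕ, ∀ᵐ x ∂μ,
            (spanningSets μ n).indicator (fun _ => (1:ℂ)) x
                * ((W (indicatorConstLp 2 hA hμA c) : Lp ℂ 2 μ) : E → ℂ) x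
              = (A ∩ spanningSets μ n).indicator (fun _ => c) x * u n x := by
          intro n
          have hsub : A ∩ spanningSets μ n ⊆ spanningSets μ n := Set.inter_subset_right
          have hμAn : μ (A ∩ spanningSets μ n) ≠ ∞ :=
            ((measure_mono hsub).trans_lt (measure_spanningSets_lt_top μ n)).ne
          have e1 : mulCLM (indMeas _ (hsmeas n) 1) (indBd _ 1) (indicatorConstLp 2 hA hμA c)
              = indicatorConstLp 2 (hA.inter (hsmeas n)) hμAn c := by
            apply Lp.ext
            filter_upwards [mulCLM_coeFn (indMeas _ (hsmeas n) 1) (indBd _ 1)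
                (indicatorConstLp 2 hA hμA c),
              indicatorConstLp_coeFn (p := 2) (hs := hA) (hμs := hμA) (c := c),
              indicatorConstLp_coeFn (p := 2) (hs := hA.inter (hsmeas n)) (hμs := hμAn)
                (c := c)] with x e a b
            rw [e, a, b]
            by_cases hx1 : x ∈ A
            · by_cases hx2 : x ∈ spanningSets μ n
              · rw [Set.indicator_of_mem hx2, Set.indicator_of_mem hx1,
                  Set.indicator_of_mem (Set.mem_inter hx1 hx2), one_mul]
              · rw [Set.indicator_of_notMem hx2,
                  Set.indicator_of_notMem (fun hm => hx2 (Set.mem_of_mem_inter_right hm)), zero_mul]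
            · by_cases hx2 : x ∈ spanningSets μ n
              · rw [Set.indicator_of_mem hx2, Set.indicator_of_notMem hx1,
                  Set.indicator_of_notMem (fun hm => hx1 (Set.mem_of_mem_inter_left hm)), mul_zero]
              · rw [Set.indicator_of_notMem hx2,
                  Set.indicator_of_notMem (fun hm => hx1 (Set.mem_of_mem_inter_left hm)), zero_mul]
          have e2 : mulCLM (indMeas _ (hA.inter (hsmeas n)) c) (indBd _ c) (χ n)
              = indicatorConstLp 2 (hA.inter (hsmeas n)) hμAn c :=
            hmulχ _ (hA.inter (hsmeas n)) hμAn c n hsub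
          have e5 : mulCLM (indMeas _ (hsmeas n) 1) (indBd _ 1)
                (W (indicatorConstLp 2 hA hμA c))
              = mulCLM (indMeas _ (hA.inter (hsmeas n)) c) (indBd _ c) (W (χ n)) := by
            rw [← commW, ← commW, e1, e2]
          filter_upwards [mulCLM_coeFn (indMeas _ (hsmeas n) 1) (indBd _ 1)
              (W (indicatorConstLp 2 hA hμA c)),
            mulCLM_coeFn (indMeas _ (hA.inter (hsmeas n)) c) (indBd _ c) (W (χ n))]
            with x p1 p2
          rw [← p1, e5, p2]
        have hall : ∀ᵐ x ∂μ,
            (∀ n, (spanningSets μ n).indicator (fun _ => (1:ℂ)) x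
                * ((W (indicatorConstLp 2 hA hμA c) : Lp ℂ 2 μ) : E → ℂ) x
              = (A ∩ spanningSets μ n).indicator (fun _ => c) x * u n x)
            ∧ (∀ n, x ∈ spanningSets μ n → g0 x = u n x) :=
          (ae_all_iff.2 step).and (ae_all_iff.2 hgu)
        filter_upwards [hall] with x hx
        obtain ⟨hx1, hx2⟩ := hx
        obtain ⟨n, hn⟩ := hex x
        have h3 := hx1 n
        rw [Set.indicator_of_mem hn, one_mul] at h3
        rw [h3]
        by_cases hxA : x ∈ A
        · rw [Set.indicator_of_mem (Set.mem_inter hxA hn), Set.indicator_of_mem hxA,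
            hx2 n hn]; ring
        · rw [Set.indicator_of_notMem (fun hm => hxA (Set.mem_of_mem_inter_left hm)),
            Set.indicator_of_notMem hxA]; ring
      -- |g0| = 1 a.e.
      have hg1 : ∀ᵐ x ∂μ, ‖g0 x‖ = 1 := by
        refine ae_norm_eq_one_of_lintegral hg0meas fun A hA hμA => ?_
        refine lintegral_sq_eq hA hμA.ne (W (indicatorConstLp 2 hA hμA.ne 1))
          (hWind 1 A hA hμA.ne) ?_
        rw [W.norm_map]
      set g' : E → ℂ := fun x => if ‖g0 x‖ = 1 then g0 x else 1 with hg'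
      have hg'meas : Measurable g' :=
        Measurable.ite (hg0meas.norm (measurableSet_singleton (1:ℝ))) hg0meas measurable_const
      have hg'bd : ∀ x, ‖g' x‖ ≤ 1 := by
        intro x
        by_cases hx : ‖g0 x‖ = 1
        · rw [hg']; simp only [if_pos hx]; rw [hx]
        · rw [hg']; simp only [if_neg hx]; simp
      have hg'ae : ∀ᵐ x ∂μ, g' x = g0 x := by
        filter_upwards [hg1] with x hx
        rw [hg']; simp only [if_pos hx]
      have main : ∀ k : Lp ℂ 2 μ, W k = mulCLM hg'meas hg'bd k := by
        refine fun k => Lp.induction (E := ℂ) (p := 2) ENNReal.ofNat_ne_top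
          (fun k => W k = mulCLM hg'meas hg'bd k) ?_ ?_ ?_ k
        · intro c A hA hμA
          rw [Lp.simpleFunc.coe_indicatorConst]
          apply Lp.ext
          filter_upwards [hWind c A hA hμA.ne,
            mulCLM_coeFn hg'meas hg'bd (indicatorConstLp 2 hA hμA.ne c),
            indicatorConstLp_coeFn (p := 2) (hs := hA) (hμs := hμA.ne) (c := c),
            hg'ae] with x e1 e2 e3 e4
          rw [e1, e2, e3, e4]
        · intro f1 f2 hf1 hf2 _ h1 h2
          rw [map_add, map_add, h1, h2]
        · exact isClosed_eq W.continuous (mulCLM hg'meas hg'bd).continuous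
      refine ⟨g', hg'meas, ⟨1, hg'bd⟩, fun h => ?_⟩
      have hm := main (U h)
      rw [hWapp, U.symm_apply_apply] at hm
      rw [hm]
      exact mulCLM_coeFn _ _ _
    · rintro ⟨g, hg, ⟨C, hb⟩, hgV⟩
      intro f hf hCf h k hk
      obtain ⟨C', hb'⟩ := hCf
      set m : Lp ℂ 2 μ := mulCLM (hf.comp T.measurable) (fun x => hb' (T x)) h with hm
      have hk2 : k = V m := by
        apply Lp.ext
        have c1 : (V m : E → ℂ) =ᵐ[μ] fun x => g x * (U m) x := hgV m
        have c2 : U m = mulCLM hf hb' (U h) := koopman hT U hU hf hb' h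
        have c3 : (V m : E → ℂ) =ᵐ[μ] fun x => f x * (V h : E → ℂ) x := by
          rw [c2] at c1
          filter_upwards [c1, mulCLM_coeFn hf hb' (U h), hgV h] with x e1 e2 e3
          rw [e1, e2, e3]; ring
        exact hk.trans c3.symm
      rw [hk2, V.symm_apply_apply]
      exact mulCLM_coeFn _ _ _
  · intro g hg hC hgV
    obtain ⟨C, hb⟩ := hC
    refine ae_norm_eq_one_of_lintegral hg fun A hA hμA => ?_
    set k : Lp ℂ 2 μ := indicatorConstLp 2 hA hμA.ne (1:ℂ) with hk
    have h1 : (V (U.symm k) : E → ℂ) =ᵐ[μ] fun x => g x * A.indicator (fun _ => (1:ℂ)) x := by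
      have h0 := hgV (U.symm k)
      simp only [U.apply_symm_apply] at h0
      refine h0.trans ?_
      filter_upwards [indicatorConstLp_coeFn (p := 2) (hs := hA) (hμs := hμA.ne) (c := (1:ℂ))]
        with x hx
      rw [hx]
    have h2 : ‖V (U.symm k)‖ = ‖k‖ := by
      rw [V.norm_map, U.symm.norm_map]
    exact lintegral_sq_eq hA hμA.ne _ h1 h2
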